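/- Let k be an even integer with k ≥ 4 and k ≠ 6 (equivalently, k ≡ 0 (mod 4), or k even with k ≥ 10). Then the packing chromatic number of the generalized Sierpiński graph of the cycle C_k of dimension 2 satisfies χρ(S^2_{C_k}) = 4. -/

import Mathlib

open SimpleGraph

/-- The generalized Sierpiński graph `S^n_G` of a graph `G` on vertex set `[k]`:
vertices are words of length `n` over `[k]`, and distinct words `u`, `v` are adjacent
iff there is an index `i` such that `u j = v j` for `j < i`, `u i v i` is an edge of `G`,
and `u j = v i`, `v j = u i` for all `j > i`. -/
def sierpinskiGraph {k : ℕ} (G : SimpleGraph (Fin k)) (n : ℕ) :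
    SimpleGraph (Fin n → Fin k) where
  Adj u v := ∃ i : Fin n,
      (∀ j, j < i → u j = v j) ∧ G.Adj (u i) (v i) ∧
      (∀ j, i < j → u j = v i ∧ v j = u i)
  symm := by
    constructor
    rintro u v ⟨i, h1, h2, h3⟩
    exact ⟨i, fun j hj => (h1 j hj).symm, h2.symm,
      fun j hj => ⟨(h3 j hj).2, (h3 j hj).1⟩⟩
  loopless := by
    constructor
    rintro u ⟨i, _, h2, _⟩
    exact G.irrefl h2

variable {n : ℕ}

lemma cyc_adj {a b : Fin (n+4)} :
    (cycleGraph (n+4)).Adj a b ↔ (b = a + 1 ∨ a = b + 1) := by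
  rw [show (cycleGraph (n+4)) = (cycleGraph (n+2+2)) by norm_num]
  rw [cycleGraph_adj]
  constructor
  · rintro (h | h)
    · right; rw [sub_eq_iff_eq_add] at h; rw [h]; abel
    · left; rw [sub_eq_iff_eq_add] at h; rw [h]; abel
  · rintro (h | h)
    · right; rw [h]; abel
    · left; rw [h]; abel

lemma S_adj {u v : Fin 2 → Fin (n+4)} :
    (sierpinskiGraph (cycleGraph (n+4)) 2).Adj u v ↔
    ((u 0 = v 0 ∧ (v 1 = u 1 + 1 ∨ u 1 = v 1 + 1)) ∨
     ((v 0 = u 0 + 1 ∨ u 0 = v 0 + 1) ∧ u 1 = v 0 ∧ v 1 = u 0)) := by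
  show (∃ i : Fin 2, _) ↔ _
  constructor
  · rintro ⟨i, h1, h2, h3⟩
    match i with
    | 1 =>
      left
      refine ⟨h1 0 (by decide), ?_⟩
      rw [cyc_adj] at h2; tauto
    | 0 =>
      right
      rw [cyc_adj] at h2
      refine ⟨by tauto, (h3 1 (by decide)).1, (h3 1 (by decide)).2⟩
  · rintro (⟨h0, h1⟩ | ⟨h0, h1, h2⟩)
    · exact ⟨1, fun j hj => by
        match j with
        | 0 => exact h0
        | 1 => exact absurd hj (by decide), by rw [cyc_adj]; tauto,
        fun j hj => absurd hj (by
          match j with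
          | 0 => decide
          | 1 => decide)⟩
    · exact ⟨0, fun j hj => absurd hj (by
        match j with
        | 0 => decide
        | 1 => decide), by rw [cyc_adj]; tauto,
        fun j hj => by
          match j with
          | 0 => exact absurd hj (by decide)
          | 1 => exact ⟨h1, h2⟩⟩


def sck (k w : ℕ) : ℕ := if w + 1 = k then 0 else w + 1
def pck (k w : ℕ) : ℕ := if w = 0 then k - 1 else w - 1
def ddk (k i j : ℕ) : ℕ := if i ≤ j then j - i else j + k - i
def cdk (k i j : ℕ) : ℕ := min (ddk k i j) (ddk k j i)

def DD (k a x b y : ℕ) : ℕ :=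
  if a = b then min (cdk k x y) 5
  else min 5 (min
    (if ddk k a b = 1 then cdk k x (sck k a) + 1 + cdk k a y
     else if ddk k a b = 2 then cdk k x (sck k a) + 4 + cdk k (sck k a) y else 9)
    (if ddk k a b = k - 1 then cdk k x (pck k a) + 1 + cdk k a y
     else if ddk k a b = k - 2 then cdk k x (pck k a) + 4 + cdk k (pck k a) y else 9))

lemma DD_le_five (k a x b y : ℕ) : DD k a x b y ≤ 5 := by
  unfold DD; split_ifs <;> omega

lemma DD_self (k a x : ℕ) : DD k a x a x = 0 := by
  unfold DD cdk ddk; simp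

lemma cdk_self (k x : ℕ) : cdk k x x = 0 := by unfold cdk ddk; simp

lemma cdk_sck (k x z : ℕ) (hx : x < k) (hz : z < k) :
    cdk k x (sck k z) ≤ cdk k x z + 1 := by
  unfold cdk ddk sck; split_ifs <;> omega

lemma cdk_sck' (k x z : ℕ) (hx : x < k) (hz : z < k) :
    cdk k x z ≤ cdk k x (sck k z) + 1 := by
  unfold cdk ddk sck; split_ifs <;> omega

lemma sck_lt (k w : ℕ) (h : w < k) : sck k w < k := by unfold sck; split_ifs <;> omega
lemma pck_lt (k w : ℕ) (h : w < k) (hk : 0 < k) : pck k w < k := by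
  unfold pck; split_ifs <;> omega

lemma ddk_self (k a : ℕ) : ddk k a a = 0 := by unfold ddk; simp
lemma ddk_sck_self (k a : ℕ) (ha : a < k) (hk : 2 ≤ k) : ddk k a (sck k a) = 1 := by
  unfold ddk sck; split_ifs <;> omega
lemma ddk_pck_self (k a : ℕ) (ha : a < k) (hk : 2 ≤ k) : ddk k a (pck k a) = k - 1 := by
  unfold ddk pck; split_ifs <;> omega
lemma ddk_sck2_self (k a : ℕ) (ha : a < k) (hk : 3 ≤ k) :
    ddk k a (sck k (sck k a)) = 2 := by
  unfold ddk sck; split_ifs <;> omega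
lemma ddk_pck2_self (k a : ℕ) (ha : a < k) (hk : 3 ≤ k) :
    ddk k a (pck k (pck k a)) = k - 2 := by
  unfold ddk pck; split_ifs <;> omega
lemma cdk_sck2_self (k a : ℕ) (ha : a < k) (hk : 4 ≤ k) :
    cdk k a (sck k (sck k a)) = 2 := by
  unfold cdk ddk sck; split_ifs <;> omega
lemma cdk_pck2_self (k a : ℕ) (ha : a < k) (hk : 4 ≤ k) :
    cdk k a (pck k (pck k a)) = 2 := by
  unfold cdk ddk pck; split_ifs <;> omega
lemma pck_of_sck (k b c : ℕ) (hb : b < k) (h : c = sck k b) : b = pck k c := by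
  unfold sck at h; unfold pck; split_ifs at * <;> omega

lemma DD_le_same (k a x y : ℕ) : DD k a x a y ≤ cdk k x y := by
  unfold DD; simp

lemma ddk_ne_zero_ne (k a b : ℕ) (h : ddk k a b ≠ 0) : a ≠ b := by
  intro he; subst he; exact h (ddk_self k a)

lemma DD_le_r1 (k a x b y : ℕ) (hk : 4 ≤ k) (h : ddk k a b = 1) :
    DD k a x b y ≤ cdk k x (sck k a) + 1 + cdk k a y := by
  have hne : a ≠ b := ddk_ne_zero_ne k a b (by omega)
  unfold DD
  rw [if_neg hne]
  refine le_trans (le_trans (min_le_right _ _) (min_le_left _ _)) ?_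
  rw [if_pos h]

lemma DD_le_r2 (k a x b y : ℕ) (hk : 4 ≤ k) (h : ddk k a b = 2) :
    DD k a x b y ≤ cdk k x (sck k a) + 4 + cdk k (sck k a) y := by
  have hne : a ≠ b := ddk_ne_zero_ne k a b (by omega)
  unfold DD
  rw [if_neg hne]
  refine le_trans (le_trans (min_le_right _ _) (min_le_left _ _)) ?_
  rw [if_neg (show ¬ ddk k a b = 1 by omega), if_pos h]

lemma DD_le_s1 (k a x b y : ℕ) (hk : 4 ≤ k) (h : ddk k a b = k - 1) :
    DD k a x b y ≤ cdk k x (pck k a) + 1 + cdk k a y := by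
  have hne : a ≠ b := ddk_ne_zero_ne k a b (by omega)
  unfold DD
  rw [if_neg hne]
  refine le_trans (le_trans (min_le_right _ _) (min_le_right _ _)) ?_
  rw [if_pos h]

lemma DD_le_s2 (k a x b y : ℕ) (hk : 4 ≤ k) (h : ddk k a b = k - 2) :
    DD k a x b y ≤ cdk k x (pck k a) + 4 + cdk k (pck k a) y := by
  have hne : a ≠ b := ddk_ne_zero_ne k a b (by omega)
  unfold DD
  rw [if_neg hne]
  refine le_trans (le_trans (min_le_right _ _) (min_le_right _ _)) ?_
  rw [if_neg (show ¬ ddk k a b = k - 1 by omega), if_pos h]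

/-- if DD ≤ 3 then the target is in one of three near regions, and DD equals that route. -/
lemma DD_small (k a x c z : ℕ) (hk : 4 ≤ k) (h : DD k a x c z ≤ 3) :
    (a = c ∧ DD k a x c z = cdk k x z) ∨
    (ddk k a c = 1 ∧ DD k a x c z = cdk k x (sck k a) + 1 + cdk k a z) ∨
    (ddk k a c = k - 1 ∧ DD k a x c z = cdk k x (pck k a) + 1 + cdk k a z) := by
  unfold DD at h ⊢
  by_cases hac : a = c
  · rw [if_pos hac] at h ⊢; exact Or.inl ⟨hac, by omega⟩
  rw [if_neg hac] at h ⊢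
  right
  by_cases h1 : ddk k a c = 1
  · rw [if_pos h1] at h ⊢
    rw [if_neg (show ¬ ddk k a c = k - 1 by omega),
        if_neg (show ¬ ddk k a c = k - 2 by omega)] at h ⊢
    left; exact ⟨h1, by omega⟩
  · rw [if_neg h1] at h ⊢
    by_cases h2 : ddk k a c = 2
    · rw [if_pos h2] at h
      rw [if_neg (show ¬ ddk k a c = k - 1 by omega)] at h
      by_cases h3 : ddk k a c = k - 2
      · rw [if_pos h3] at h; omega
      · rw [if_neg h3] at h; omega
    · rw [if_neg h2] at h ⊢
      by_cases h3 : ddk k a c = k - 1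
      · rw [if_pos h3] at h ⊢; right; exact ⟨h3, by omega⟩
      · rw [if_neg h3] at h
        by_cases h4 : ddk k a c = k - 2
        · rw [if_pos h4] at h; omega
        · rw [if_neg h4] at h; omega

/-- Lipschitz property of `DD` along edges of `S²(C_k)`. -/
lemma DD_lip (k a x b y c z : ℕ) (hk : 4 ≤ k) (ha : a < k) (hx : x < k)
    (hb : b < k) (hy : y < k) (hc : c < k) (hz : z < k)
    (hadj : (b = c ∧ (z = sck k y ∨ y = sck k z)) ∨
      ((c = sck k b ∨ b = sck k c) ∧ y = c ∧ z = b)) :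
    DD k a x b y ≤ DD k a x c z + 1 := by
  by_cases hbig : 4 ≤ DD k a x c z
  · have := DD_le_five k a x b y; omega
  rcases hadj with ⟨hbc, hcyc⟩ | ⟨hcb, hyc, hzb⟩
  · -- edge within block, b = c
    subst hbc
    rcases DD_small k a x b z hk (by omega) with ⟨hab, heq⟩ | ⟨hd1, heq⟩ | ⟨hd1, heq⟩
    · subst hab
      have h1 := DD_le_same k a x y
      rcases hcyc with hzy | hyz
      · have h2 := cdk_sck' k x y hx hy; rw [← hzy] at h2; omega
      · have h2 := cdk_sck k x z hx hz; rw [← hyz] at h2; omega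
    · have h1 := DD_le_r1 k a x b y hk hd1
      rcases hcyc with hzy | hyz
      · have h2 := cdk_sck' k a y ha hy; rw [← hzy] at h2; omega
      · have h2 := cdk_sck k a z ha hz; rw [← hyz] at h2; omega
    · have h1 := DD_le_s1 k a x b y hk hd1
      rcases hcyc with hzy | hyz
      · have h2 := cdk_sck' k a y ha hy; rw [← hzy] at h2; omega
      · have h2 := cdk_sck k a z ha hz; rw [← hyz] at h2; omega
  · -- cross edge: y = c, z = b
    rw [hyc]
    rw [hzb] at hbig ⊢
    rcases DD_small k a x c b hk (by omega) with ⟨hab, heq⟩ | ⟨hd1, heq⟩ | ⟨hd1, heq⟩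
    · -- c = a : u's block; target v = (b, a)
      subst hab
      rcases hcb with hab2 | hba2
      · have hbp : b = pck k a := pck_of_sck k b a hb hab2
        have hdd : ddk k a b = k - 1 := by
          rw [hbp]; exact ddk_pck_self k a ha (by omega)
        have h1 := DD_le_s1 k a x b a hk hdd
        rw [cdk_self] at h1
        rw [← hbp] at h1; omega
      · have hdd : ddk k a b = 1 := by
          rw [hba2]; exact ddk_sck_self k a ha (by omega)
        have h1 := DD_le_r1 k a x b a hk hdd
        rw [cdk_self, ← hba2] at h1; omega
    · -- c = sck a
      have hcs : c = sck k a := by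
        unfold ddk at hd1; unfold sck; split_ifs at hd1 ⊢ <;> omega
      rcases hcb with hab2 | hba2
      · -- c = sck b : b = pck c = a
        have hba' : b = a := by
          have h2 := hab2
          rw [hcs] at h2
          unfold sck at h2; split_ifs at h2 <;> omega
        subst hba'
        have h1 := DD_le_same k b x c
        rw [cdk_self k b] at heq
        rw [← hcs] at heq
        omega
      · -- b = sck c = sck (sck a)
        have hdd : ddk k a b = 2 := by
          rw [hba2, hcs]; exact ddk_sck2_self k a ha (by omega)
        have h1 := DD_le_r2 k a x b c hk hdd
        rw [← hcs] at h1
        rw [cdk_self] at h1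
        have h2 : cdk k a b = 2 := by rw [hba2, hcs]; exact cdk_sck2_self k a ha hk
        rw [← hcs] at heq
        omega
    · -- c = pck a
      have hcs : c = pck k a := by
        unfold ddk at hd1; unfold pck; split_ifs at hd1 ⊢ <;> omega
      rcases hcb with hab2 | hba2
      · -- c = sck b : b = pck c = pck (pck a)
        have hbp : b = pck k c := pck_of_sck k b c hb hab2
        have hdd : ddk k a b = k - 2 := by
          rw [hbp, hcs]; exact ddk_pck2_self k a ha (by omega)
        have h1 := DD_le_s2 k a x b c hk hdd
        rw [← hcs] at h1
        rw [cdk_self] at h1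
        have h2 : cdk k a b = 2 := by rw [hbp, hcs]; exact cdk_pck2_self k a ha hk
        rw [← hcs] at heq
        omega
      · -- b = sck c = sck (pck a) = a
        have hba' : b = a := by
          rw [hcs] at hba2; unfold sck pck at hba2; split_ifs at hba2 <;> omega
        subst hba'
        have h1 := DD_le_same k b x c
        rw [cdk_self k b] at heq
        rw [← hcs] at heq
        omega

/-- `(w+1).val = sck`. -/
lemma val_add_one_sck (a : Fin (n+4)) : (a + 1).val = sck (n+4) a.val := by
  rcases a with ⟨v, hv⟩
  unfold sck
  simp only [Fin.add_def, Fin.val_one, Fin.val_mk]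
  split_ifs with h
  · rw [h, Nat.mod_self]
  · rw [Nat.mod_eq_of_lt (by omega)]

/-- `DD` at vertex level. -/
def DDv (u v : Fin 2 → Fin (n+4)) : ℕ :=
  DD (n+4) (u 0).val (u 1).val (v 0).val (v 1).val

lemma DDv_lip {u v w : Fin 2 → Fin (n+4)}
    (h : (sierpinskiGraph (cycleGraph (n+4)) 2).Adj v w) :
    DDv u v ≤ DDv u w + 1 := by
  rw [S_adj] at h
  apply DD_lip (n+4) (u 0).val (u 1).val (v 0).val (v 1).val (w 0).val (w 1).val
    (by omega) (Fin.is_lt _) (Fin.is_lt _) (Fin.is_lt _) (Fin.is_lt _) (Fin.is_lt _)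
    (Fin.is_lt _)
  rcases h with ⟨h0, h1 | h1⟩ | ⟨(h0 | h0), h1, h2⟩
  · exact Or.inl ⟨by rw [h0], Or.inl (by rw [h1, val_add_one_sck])⟩
  · exact Or.inl ⟨by rw [h0], Or.inr (by rw [h1, val_add_one_sck])⟩
  · exact Or.inr ⟨Or.inl (by rw [h0, val_add_one_sck]), by rw [h1], by rw [h2]⟩
  · exact Or.inr ⟨Or.inr (by rw [h0, val_add_one_sck]), by rw [h1], by rw [h2]⟩

lemma DDv_le_walk (u : Fin 2 → Fin (n+4)) :
    ∀ (v w : Fin 2 → Fin (n+4)) (p : (sierpinskiGraph (cycleGraph (n+4)) 2).Walk v w),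
      DDv u w ≤ DDv u v + p.length := by
  intro v w p
  induction p with
  | nil => simp
  | @cons a b c hadj p ih =>
    have h1 : DDv u b ≤ DDv u a + 1 := DDv_lip hadj.symm
    simp only [SimpleGraph.Walk.length_cons]
    omega

lemma DDv_le_edist (u v : Fin 2 → Fin (n+4)) :
    (DDv u v : ℕ∞) ≤ (sierpinskiGraph (cycleGraph (n+4)) 2).edist u v := by
  rw [edist_eq_sInf]
  refine le_sInf ?_
  rintro x ⟨p, rfl⟩
  simp only []
  have := DDv_le_walk u u v p
  have h0 : DDv u u = 0 := DD_self _ _ _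
  rw [h0, Nat.zero_add] at this
  exact_mod_cast this

/-- `f` is a packing `c`-coloring of `H`: colors lie in `{1, …, c}` and any two distinct
vertices of the same color `t` are at (extended) distance greater than `t`. -/
def IsPackingColoring {V : Type*} (H : SimpleGraph V) (f : V → ℕ) (c : ℕ) : Prop :=
  (∀ v, 1 ≤ f v ∧ f v ≤ c) ∧
    ∀ u v, u ≠ v → f u = f v → (f u : ℕ∞) < H.edist u v

/-- main upper-bound criterion -/
lemma isPacking_of_DDv (f : (Fin 2 → Fin (n+4)) → ℕ)
    (h1 : ∀ v, 1 ≤ f v ∧ f v ≤ 4)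
    (h2 : ∀ u v, u ≠ v → f u = f v → f u < DDv u v) :
    IsPackingColoring (sierpinskiGraph (cycleGraph (n+4)) 2) f 4 := by
  refine ⟨h1, fun u v hne hc => ?_⟩
  have := h2 u v hne hc
  calc (f u : ℕ∞) < (DDv u v : ℕ∞) := by exact_mod_cast this
    _ ≤ _ := DDv_le_edist u v

section Criterion

lemma ddk_lt (k i j : ℕ) (hj : j < k) (hi : i < k) : ddk k i j < k := by
  unfold ddk; split_ifs <;> omega

lemma cdk_comm (k i j : ℕ) : cdk k i j = cdk k j i := by
  unfold cdk; omega

lemma cdk_shift (k a x y : ℕ) (ha : a < k) (hx : x < k) (hy : y < k) :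
    cdk k x y = cdk k (ddk k a x) (ddk k a y) := by
  unfold cdk ddk; split_ifs <;> omega

lemma ddk_inj (k a x y : ℕ) (ha : a < k) (hx : x < k) (hy : y < k)
    (h : ddk k a x = ddk k a y) : x = y := by
  unfold ddk at h; split_ifs at h <;> omega

lemma ddk_rev (k a b : ℕ) (ha : a < k) (hb : b < k) (hne : a ≠ b) :
    ddk k a b + ddk k b a = k := by
  unfold ddk; split_ifs <;> omega

lemma DD_eval_1 (k a x b y : ℕ) (hk : 4 ≤ k) (h : ddk k a b = 1) :
    DD k a x b y = min 5 (min (cdk k x (sck k a) + 1 + cdk k a y) 9) := by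
  have hne : a ≠ b := ddk_ne_zero_ne k a b (by omega)
  unfold DD
  rw [if_neg hne, if_pos h, if_neg (show ¬ ddk k a b = k - 1 by omega),
    if_neg (show ¬ ddk k a b = k - 2 by omega)]

lemma DD_eval_k1 (k a x b y : ℕ) (hk : 4 ≤ k) (h : ddk k a b = k - 1) :
    DD k a x b y = min 5 (min 9 (cdk k x (pck k a) + 1 + cdk k a y)) := by
  have hne : a ≠ b := ddk_ne_zero_ne k a b (by omega)
  unfold DD
  rw [if_neg hne, if_pos h, if_neg (show ¬ ddk k a b = 1 by omega),
    if_neg (show ¬ ddk k a b = 2 by omega)]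

lemma DD_eval_2 (k a x b y : ℕ) (hk : 5 ≤ k) (h : ddk k a b = 2) :
    DD k a x b y = min 5 (min (cdk k x (sck k a) + 4 + cdk k (sck k a) y) 9) := by
  have hne : a ≠ b := ddk_ne_zero_ne k a b (by omega)
  unfold DD
  rw [if_neg hne, if_pos h, if_neg (show ¬ ddk k a b = 1 by omega),
    if_neg (show ¬ ddk k a b = k - 1 by omega),
    if_neg (show ¬ ddk k a b = k - 2 by omega)]

lemma DD_eval_2' (k a x b y : ℕ) (hk : k = 4) (h : ddk k a b = 2) :
    DD k a x b y = min 5 (min (cdk k x (sck k a) + 4 + cdk k (sck k a) y)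
      (cdk k x (pck k a) + 4 + cdk k (pck k a) y)) := by
  have hne : a ≠ b := ddk_ne_zero_ne k a b (by omega)
  unfold DD
  rw [if_neg hne, if_pos h, if_neg (show ¬ ddk k a b = 1 by omega),
    if_neg (show ¬ ddk k a b = k - 1 by omega),
    if_pos (show ddk k a b = k - 2 by omega)]

lemma DD_eval_k2 (k a x b y : ℕ) (hk : 5 ≤ k) (h : ddk k a b = k - 2) :
    DD k a x b y = min 5 (min 9 (cdk k x (pck k a) + 4 + cdk k (pck k a) y)) := by
  have hne : a ≠ b := ddk_ne_zero_ne k a b (by omega)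
  unfold DD
  rw [if_neg hne, if_neg (show ¬ ddk k a b = 1 by omega),
    if_neg (show ¬ ddk k a b = 2 by omega),
    if_neg (show ¬ ddk k a b = k - 1 by omega), if_pos h]

lemma DD_eval_far (k a x b y : ℕ) (hk : 4 ≤ k) (hne : a ≠ b) (h1 : ddk k a b ≠ 1)
    (h2 : ddk k a b ≠ 2) (h3 : ddk k a b ≠ k - 1) (h4 : ddk k a b ≠ k - 2) :
    DD k a x b y = 5 := by
  unfold DD
  rw [if_neg hne, if_neg h1, if_neg h2, if_neg h3, if_neg h4]
  omega

/-- master criterion for 2-periodic block colorings, at ℕ level. -/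
lemma pack_crit (k : ℕ) (hk : 4 ≤ k) (hke : k % 2 = 0) (g h : ℕ → ℕ)
    (hg4 : ∀ j, j < k → g j ≤ 4) (hh4 : ∀ j, j < k → h j ≤ 4)
    (V1g : ∀ j1 j2, j1 < k → j2 < k → j1 ≠ j2 → g j1 = g j2 → g j1 < cdk k j1 j2)
    (V1h : ∀ j1 j2, j1 < k → j2 < k → j1 ≠ j2 → h j1 = h j2 → h j1 < cdk k j1 j2)
    (V2gh : ∀ j1 j2, j1 < k → j2 < k → g j1 = h j2 →
      g j1 < cdk k j1 1 + 1 + cdk k j2 (k-1))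
    (V2hg : ∀ j1 j2, j1 < k → j2 < k → h j1 = g j2 →
      h j1 < cdk k j1 1 + 1 + cdk k j2 (k-1))
    (V34g : ∀ j1 j2, j1 < k → j2 < k → g j1 = 4 → g j2 = 4 →
      4 < cdk k j1 1 + 4 + cdk k j2 (k-1))
    (V34h : ∀ j1 j2, j1 < k → j2 < k → h j1 = 4 → h j2 = 4 →
      4 < cdk k j1 1 + 4 + cdk k j2 (k-1)) :
    ∀ a x b y, a < k → x < k → b < k → y < k → ¬(a = b ∧ x = y) →
      (if a % 2 = 0 then g (ddk k a x) else h (ddk k a x)) =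
        (if b % 2 = 0 then g (ddk k b y) else h (ddk k b y)) →
      (if a % 2 = 0 then g (ddk k a x) else h (ddk k a x)) < DD k a x b y := by
  intro a x b y ha hx hb hy hne hcol
  set j1 := ddk k a x with hj1
  set j2 := ddk k b y with hj2
  have hj1k : j1 < k := ddk_lt k a x hx ha
  have hj2k : j2 < k := ddk_lt k b y hy hb
  -- the color t
  by_cases hab : a = b
  · -- same block
    subst hab
    have hxy : x ≠ y := fun hxy => hne ⟨rfl, hxy⟩
    have hjne : j1 ≠ j2 := fun hj => hxy (ddk_inj k a x y ha hx hy (by rw [← hj1, ← hj2, hj]))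
    have hshift : cdk k x y = cdk k j1 j2 := cdk_shift k a x y ha hx hy
    have hDD : DD k a x a y = min (cdk k x y) 5 := by unfold DD; rw [if_pos rfl]
    by_cases hpar : a % 2 = 0
    · rw [if_pos hpar] at hcol ⊢
      rw [if_pos hpar] at hcol
      have := V1g j1 j2 hj1k hj2k hjne hcol
      have := hg4 j1 hj1k
      omega
    · rw [if_neg hpar] at hcol ⊢
      rw [if_neg hpar] at hcol
      have := V1h j1 j2 hj1k hj2k hjne hcol
      have := hh4 j1 hj1k
      omega
  · -- different blocks
    have hrev : ddk k a b + ddk k b a = k := ddk_rev k a b ha hb hab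
    by_cases hd1 : ddk k a b = 1
    · -- b = succ a : opposite parity
      have hbs : b = sck k a := by
        unfold ddk at hd1; unfold sck; split_ifs at hd1 ⊢ <;> omega
      have hpar : b % 2 = (a + 1) % 2 := by
        unfold sck at hbs; split_ifs at hbs <;> omega
      have e1 : cdk k x (sck k a) = cdk k j1 1 := by
        rw [hj1, cdk_shift k a x (sck k a) ha hx (sck_lt k a ha),
          ddk_sck_self k a ha (by omega)]
      have e2 : cdk k a y = cdk k (k-1) j2 := by
        rw [hj2, cdk_shift k b a y hb (by omega) hy,
          show ddk k b a = k - 1 by omega]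
      have hDD := DD_eval_1 k a x b y hk hd1
      by_cases hpa : a % 2 = 0
      · rw [if_pos hpa] at hcol ⊢
        rw [if_neg (by omega)] at hcol
        have := V2gh j1 j2 hj1k hj2k hcol
        have := hg4 j1 hj1k
        have := cdk_comm k (k-1) j2
        omega
      · rw [if_neg hpa] at hcol ⊢
        rw [if_pos (by omega)] at hcol
        have := V2hg j1 j2 hj1k hj2k hcol
        have := hh4 j1 hj1k
        have := cdk_comm k (k-1) j2
        omega
    · by_cases hdk1 : ddk k a b = k - 1
      · -- a = succ b : opposite parity
        have hd1' : ddk k b a = 1 := by omega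
        have hpar : a % 2 = (b + 1) % 2 := by
          have has : a = sck k b := by
            unfold ddk at hd1'; unfold sck; split_ifs at hd1' ⊢ <;> omega
          unfold sck at has; split_ifs at has <;> omega
        have e1 : cdk k x (pck k a) = cdk k j1 (k-1) := by
          rw [hj1, cdk_shift k a x (pck k a) ha hx (pck_lt k a ha (by omega)),
            ddk_pck_self k a ha (by omega)]
        have e2 : cdk k a y = cdk k 1 j2 := by
          rw [hj2, cdk_shift k b a y hb (by omega) hy, hd1']
        have hDD := DD_eval_k1 k a x b y hk hdk1
        by_cases hpa : a % 2 = 0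
        · rw [if_pos hpa] at hcol ⊢
          rw [if_neg (by omega)] at hcol
          have := V2hg j2 j1 hj2k hj1k hcol.symm
          have := hg4 j1 hj1k
          have := cdk_comm k 1 j2
          have := cdk_comm k j1 (k-1)
          omega
        · rw [if_neg hpa] at hcol ⊢
          rw [if_pos (by omega)] at hcol
          have := V2gh j2 j1 hj2k hj1k hcol.symm
          have := hh4 j1 hj1k
          have := cdk_comm k 1 j2
          have := cdk_comm k j1 (k-1)
          omega
      · by_cases hd2 : ddk k a b = 2
        · -- blocks at distance 2 (same parity)
          have hpar : a % 2 = b % 2 := by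
            unfold ddk at hd2; split_ifs at hd2 <;> omega
          have e1 : cdk k x (sck k a) = cdk k j1 1 := by
            rw [hj1, cdk_shift k a x (sck k a) ha hx (sck_lt k a ha),
              ddk_sck_self k a ha (by omega)]
          have e2 : cdk k (sck k a) y = cdk k (k-1) j2 := by
            rw [hj2, cdk_shift k b (sck k a) y hb (sck_lt k a ha) hy,
              show ddk k b (sck k a) = k - 1 by
                unfold ddk at hd2; unfold ddk sck; split_ifs at hd2 ⊢ <;> omega]
          by_cases hk4 : k = 4
          · have e3 : cdk k x (pck k a) = cdk k j1 (k-1) := by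
              rw [hj1, cdk_shift k a x (pck k a) ha hx (pck_lt k a ha (by omega)),
                ddk_pck_self k a ha (by omega)]
            have e4 : cdk k (pck k a) y = cdk k 1 j2 := by
              rw [hj2, cdk_shift k b (pck k a) y hb (pck_lt k a ha (by omega)) hy,
                show ddk k b (pck k a) = 1 by
                  unfold ddk at hd2; unfold ddk pck; split_ifs at hd2 ⊢ <;> omega]
            have hDD := DD_eval_2' k a x b y hk4 hd2
            by_cases hpa : a % 2 = 0
            · rw [if_pos hpa] at hcol ⊢
              rw [if_pos (by omega)] at hcol
              have h4g : g j1 = 4 → 4 < cdk k j1 1 + 4 + cdk k j2 (k-1) :=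
                fun h4 => V34g j1 j2 hj1k hj2k h4 (by omega)
              have h4g' : g j1 = 4 → 4 < cdk k j2 1 + 4 + cdk k j1 (k-1) :=
                fun h4 => V34g j2 j1 hj2k hj1k (by omega) h4
              have := hg4 j1 hj1k
              have := cdk_comm k (k-1) j2
              have := cdk_comm k 1 j2
              have := cdk_comm k j1 (k-1)
              omega
            · rw [if_neg hpa] at hcol ⊢
              rw [if_neg (by omega)] at hcol
              have h4g : h j1 = 4 → 4 < cdk k j1 1 + 4 + cdk k j2 (k-1) :=
                fun h4 => V34h j1 j2 hj1k hj2k h4 (by omega)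
              have h4g' : h j1 = 4 → 4 < cdk k j2 1 + 4 + cdk k j1 (k-1) :=
                fun h4 => V34h j2 j1 hj2k hj1k (by omega) h4
              have := hh4 j1 hj1k
              have := cdk_comm k (k-1) j2
              have := cdk_comm k 1 j2
              have := cdk_comm k j1 (k-1)
              omega
          · have hDD := DD_eval_2 k a x b y (by omega) hd2
            by_cases hpa : a % 2 = 0
            · rw [if_pos hpa] at hcol ⊢
              rw [if_pos (by omega)] at hcol
              have h4g : g j1 = 4 → 4 < cdk k j1 1 + 4 + cdk k j2 (k-1) :=
                fun h4 => V34g j1 j2 hj1k hj2k h4 (by omega)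
              have := hg4 j1 hj1k
              have := cdk_comm k (k-1) j2
              omega
            · rw [if_neg hpa] at hcol ⊢
              rw [if_neg (by omega)] at hcol
              have h4g : h j1 = 4 → 4 < cdk k j1 1 + 4 + cdk k j2 (k-1) :=
                fun h4 => V34h j1 j2 hj1k hj2k h4 (by omega)
              have := hh4 j1 hj1k
              have := cdk_comm k (k-1) j2
              omega
        · by_cases hdk2 : ddk k a b = k - 2
          · -- blocks at distance k-2 (same parity), k ≥ 5 here since k=4 gives ddk=2
            have hk5 : 5 ≤ k := by omega
            have hpar : a % 2 = b % 2 := by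
              unfold ddk at hdk2; split_ifs at hdk2 <;> omega
            have hd2' : ddk k b a = 2 := by omega
            have e1 : cdk k x (pck k a) = cdk k j1 (k-1) := by
              rw [hj1, cdk_shift k a x (pck k a) ha hx (pck_lt k a ha (by omega)),
                ddk_pck_self k a ha (by omega)]
            have e2 : cdk k (pck k a) y = cdk k 1 j2 := by
              rw [hj2, cdk_shift k b (pck k a) y hb (pck_lt k a ha (by omega)) hy,
                show ddk k b (pck k a) = 1 by
                  unfold ddk at hd2'; unfold ddk pck; split_ifs at hd2' ⊢ <;> omega]
            have hDD := DD_eval_k2 k a x b y hk5 hdk2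
            by_cases hpa : a % 2 = 0
            · rw [if_pos hpa] at hcol ⊢
              rw [if_pos (by omega)] at hcol
              have h4g : g j1 = 4 → 4 < cdk k j2 1 + 4 + cdk k j1 (k-1) :=
                fun h4 => V34g j2 j1 hj2k hj1k (by omega) h4
              have := hg4 j1 hj1k
              have := cdk_comm k 1 j2
              have := cdk_comm k j1 (k-1)
              omega
            · rw [if_neg hpa] at hcol ⊢
              rw [if_neg (by omega)] at hcol
              have h4g : h j1 = 4 → 4 < cdk k j2 1 + 4 + cdk k j1 (k-1) :=
                fun h4 => V34h j2 j1 hj2k hj1k (by omega) h4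
              have := hh4 j1 hj1k
              have := cdk_comm k 1 j2
              have := cdk_comm k j1 (k-1)
              omega
          · -- far blocks
            have hDD := DD_eval_far k a x b y hk hab hd1 hd2 hdk1 hdk2
            by_cases hpa : a % 2 = 0
            · rw [if_pos hpa] at hcol ⊢
              have := hg4 j1 hj1k
              omega
            · rw [if_neg hpa] at hcol ⊢
              have := hh4 j1 hj1k
              omega

end Criterion

section Families
variable {n : ℕ}

/-- vertex-level coloring from a pair of patterns -/
def fcol (k : ℕ) (g h : ℕ → ℕ) (u : Fin 2 → Fin k) : ℕ :=
  if (u 0).val % 2 = 0 then g (ddk k (u 0).val (u 1).val) else h (ddk k (u 0).val (u 1).val)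

lemma vertex_eq {k : ℕ} (u v : Fin 2 → Fin k) (h0 : (u 0).val = (v 0).val)
    (h1 : (u 1).val = (v 1).val) : u = v := by
  funext i
  match i with
  | 0 => exact Fin.ext h0
  | 1 => exact Fin.ext h1

lemma pack_mem_of_patterns (hke : (n+4) % 2 = 0) (g h : ℕ → ℕ)
    (hg1 : ∀ j, j < n+4 → 1 ≤ g j) (hh1 : ∀ j, j < n+4 → 1 ≤ h j)
    (hg4 : ∀ j, j < n+4 → g j ≤ 4) (hh4 : ∀ j, j < n+4 → h j ≤ 4)
    (V1g : ∀ j1 j2, j1 < n+4 → j2 < n+4 → j1 ≠ j2 → g j1 = g j2 → g j1 < cdk (n+4) j1 j2)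
    (V1h : ∀ j1 j2, j1 < n+4 → j2 < n+4 → j1 ≠ j2 → h j1 = h j2 → h j1 < cdk (n+4) j1 j2)
    (V2gh : ∀ j1 j2, j1 < n+4 → j2 < n+4 → g j1 = h j2 →
      g j1 < cdk (n+4) j1 1 + 1 + cdk (n+4) j2 (n+4-1))
    (V2hg : ∀ j1 j2, j1 < n+4 → j2 < n+4 → h j1 = g j2 →
      h j1 < cdk (n+4) j1 1 + 1 + cdk (n+4) j2 (n+4-1))
    (V34g : ∀ j1 j2, j1 < n+4 → j2 < n+4 → g j1 = 4 → g j2 = 4 →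
      4 < cdk (n+4) j1 1 + 4 + cdk (n+4) j2 (n+4-1))
    (V34h : ∀ j1 j2, j1 < n+4 → j2 < n+4 → h j1 = 4 → h j2 = 4 →
      4 < cdk (n+4) j1 1 + 4 + cdk (n+4) j2 (n+4-1)) :
    IsPackingColoring (sierpinskiGraph (cycleGraph (n+4)) 2) (fcol (n+4) g h) 4 := by
  apply isPacking_of_DDv
  · intro v
    unfold fcol
    have b0 : (v 0).val < n+4 := Fin.is_lt _
    have b1 : (v 1).val < n+4 := Fin.is_lt _
    have hd : ddk (n+4) (v 0).val (v 1).val < n+4 := ddk_lt _ _ _ b1 b0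
    split_ifs
    · exact ⟨hg1 _ hd, hg4 _ hd⟩
    · exact ⟨hh1 _ hd, hh4 _ hd⟩
  · intro u v hne hcol
    have key := pack_crit (n+4) (by omega) hke g h hg4 hh4 V1g V1h V2gh V2hg V34g V34h
      (u 0).val (u 1).val (v 0).val (v 1).val (Fin.is_lt _) (Fin.is_lt _)
      (Fin.is_lt _) (Fin.is_lt _)
      (fun hc => hne (vertex_eq u v hc.1 hc.2)) hcol
    exact key

/-- pattern g for k ≡ 2 (mod 4), k ≥ 10 -/
def gA (k j : ℕ) : ℕ :=
  if j = k-5 then 4 else if j = k-3 then 2 else if j = k-1 then 3 else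
  if j % 2 = 0 then 1 else if j % 4 = 1 then 2 else 3
/-- pattern h for k ≡ 2 (mod 4), k ≥ 10 -/
def hA (k j : ℕ) : ℕ :=
  if j = 0 then 4 else if j % 2 = 1 then 1 else if j % 4 = 0 then 3 else 2

lemma cdk_eq (k i j : ℕ) (hi : i < k) (hj : j < k) :
    cdk k i j = min (max i j - min i j) (k - (max i j - min i j)) := by
  unfold cdk ddk; split_ifs <;> omega

lemma gA_cases (k j : ℕ) (hk : 10 ≤ k) (hm : k % 4 = 2) (hj : j < k) :
    (gA k j = 4 ∧ j = k-5) ∨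
    (gA k j = 2 ∧ (j = k-3 ∨ (j % 4 = 1 ∧ j ≠ k-5 ∧ j ≠ k-1))) ∨
    (gA k j = 3 ∧ (j = k-1 ∨ (j % 4 = 3 ∧ j ≠ k-3))) ∨
    (gA k j = 1 ∧ j % 2 = 0) := by
  unfold gA; split_ifs <;> omega

lemma hA_cases (k j : ℕ) (hk : 10 ≤ k) (hm : k % 4 = 2) (hj : j < k) :
    (hA k j = 4 ∧ j = 0) ∨
    (hA k j = 1 ∧ j % 2 = 1) ∨
    (hA k j = 3 ∧ j % 4 = 0 ∧ j ≠ 0) ∨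
    (hA k j = 2 ∧ j % 4 = 2) := by
  unfold hA; split_ifs <;> omega

lemma famA (n : ℕ) (hk : 10 ≤ n+4) (hm : (n+4) % 4 = 2) :
    IsPackingColoring (sierpinskiGraph (cycleGraph (n+4)) 2)
      (fcol (n+4) (gA (n+4)) (hA (n+4))) 4 := by
  set k := n + 4 with hkdef
  have hke : k % 2 = 0 := by omega
  apply pack_mem_of_patterns hke
  · intro j hj; rcases gA_cases k j hk hm hj with ⟨h,_⟩|⟨h,_⟩|⟨h,_⟩|⟨h,_⟩ <;> omega
  · intro j hj; rcases hA_cases k j hk hm hj with ⟨h,_⟩|⟨h,_⟩|⟨h,_⟩|⟨h,_⟩ <;> omega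
  · intro j hj; rcases gA_cases k j hk hm hj with ⟨h,_⟩|⟨h,_⟩|⟨h,_⟩|⟨h,_⟩ <;> omega
  · intro j hj; rcases hA_cases k j hk hm hj with ⟨h,_⟩|⟨h,_⟩|⟨h,_⟩|⟨h,_⟩ <;> omega
  · -- V1g
    intro j1 j2 h1 h2 hne hc
    rcases gA_cases k j1 hk hm h1 with ⟨e1,p1⟩|⟨e1,p1⟩|⟨e1,p1⟩|⟨e1,p1⟩ <;>
      rcases gA_cases k j2 hk hm h2 with ⟨e2,p2⟩|⟨e2,p2⟩|⟨e2,p2⟩|⟨e2,p2⟩ <;>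
      rw [e1] at hc ⊢ <;> rw [cdk_eq k j1 j2 h1 h2] <;> omega
  · -- V1h
    intro j1 j2 h1 h2 hne hc
    rcases hA_cases k j1 hk hm h1 with ⟨e1,p1⟩|⟨e1,p1⟩|⟨e1,p1⟩|⟨e1,p1⟩ <;>
      rcases hA_cases k j2 hk hm h2 with ⟨e2,p2⟩|⟨e2,p2⟩|⟨e2,p2⟩|⟨e2,p2⟩ <;>
      rw [e1] at hc ⊢ <;> rw [cdk_eq k j1 j2 h1 h2] <;> omega
  · -- V2gh
    intro j1 j2 h1 h2 hc
    rcases gA_cases k j1 hk hm h1 with ⟨e1,p1⟩|⟨e1,p1⟩|⟨e1,p1⟩|⟨e1,p1⟩ <;>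
      rcases hA_cases k j2 hk hm h2 with ⟨e2,p2⟩|⟨e2,p2⟩|⟨e2,p2⟩|⟨e2,p2⟩ <;>
      rw [e1] at hc ⊢ <;>
      rw [cdk_eq k j1 1 h1 (by omega), cdk_eq k j2 (k-1) h2 (by omega)] <;> omega
  · -- V2hg
    intro j1 j2 h1 h2 hc
    rcases hA_cases k j1 hk hm h1 with ⟨e1,p1⟩|⟨e1,p1⟩|⟨e1,p1⟩|⟨e1,p1⟩ <;>
      rcases gA_cases k j2 hk hm h2 with ⟨e2,p2⟩|⟨e2,p2⟩|⟨e2,p2⟩|⟨e2,p2⟩ <;>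
      rw [e1] at hc ⊢ <;>
      rw [cdk_eq k j1 1 h1 (by omega), cdk_eq k j2 (k-1) h2 (by omega)] <;> omega
  · -- V34g
    intro j1 j2 h1 h2 hc1 hc2
    rcases gA_cases k j1 hk hm h1 with ⟨e1,p1⟩|⟨e1,p1⟩|⟨e1,p1⟩|⟨e1,p1⟩ <;>
      rcases gA_cases k j2 hk hm h2 with ⟨e2,p2⟩|⟨e2,p2⟩|⟨e2,p2⟩|⟨e2,p2⟩ <;>
      rw [cdk_eq k j1 1 h1 (by omega), cdk_eq k j2 (k-1) h2 (by omega)] <;> omega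
  · -- V34h
    intro j1 j2 h1 h2 hc1 hc2
    rcases hA_cases k j1 hk hm h1 with ⟨e1,p1⟩|⟨e1,p1⟩|⟨e1,p1⟩|⟨e1,p1⟩ <;>
      rcases hA_cases k j2 hk hm h2 with ⟨e2,p2⟩|⟨e2,p2⟩|⟨e2,p2⟩|⟨e2,p2⟩ <;>
      rw [cdk_eq k j1 1 h1 (by omega), cdk_eq k j2 (k-1) h2 (by omega)] <;> omega

section Lower
variable {n : ℕ} (f : (Fin 2 → Fin (n+4)) → ℕ)

/-- vertex constructor -/
def mkv (a b : Fin (n+4)) : Fin 2 → Fin (n+4) := ![a, b]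

lemma mkv_zero (a b : Fin (n+4)) : mkv a b 0 = a := rfl
lemma mkv_one (a b : Fin (n+4)) : mkv a b 1 = b := rfl

lemma adj_step (a z : Fin (n+4)) :
    (sierpinskiGraph (cycleGraph (n+4)) 2).Adj (mkv a z) (mkv a (z+1)) :=
  S_adj.mpr (Or.inl ⟨rfl, Or.inl rfl⟩)

lemma adj_cross (a : Fin (n+4)) :
    (sierpinskiGraph (cycleGraph (n+4)) 2).Adj (mkv a (a+1)) (mkv (a+1) a) :=
  S_adj.mpr (Or.inr ⟨Or.inl rfl, rfl, rfl⟩)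

lemma e_adj {u v : Fin 2 → Fin (n+4)}
    (h : (sierpinskiGraph (cycleGraph (n+4)) 2).Adj u v) :
    (sierpinskiGraph (cycleGraph (n+4)) 2).edist u v ≤ 1 :=
  (SimpleGraph.edist_eq_one_iff_adj.mpr h).le

lemma e_tri {u v w : Fin 2 → Fin (n+4)} (r s : ℕ)
    (h1 : (sierpinskiGraph (cycleGraph (n+4)) 2).edist u v ≤ (r : ℕ∞))
    (h2 : (sierpinskiGraph (cycleGraph (n+4)) 2).edist v w ≤ (s : ℕ∞)) :
    (sierpinskiGraph (cycleGraph (n+4)) 2).edist u w ≤ ((r + s : ℕ) : ℕ∞) := by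
  calc (sierpinskiGraph (cycleGraph (n+4)) 2).edist u w
      ≤ _ + _ := SimpleGraph.edist_triangle (v := v)
    _ ≤ (r : ℕ∞) + (s : ℕ∞) := add_le_add h1 h2
    _ = ((r + s : ℕ) : ℕ∞) := by rw [Nat.cast_add]

lemma ecomm {u v : Fin 2 → Fin (n+4)} :
    (sierpinskiGraph (cycleGraph (n+4)) 2).edist u v =
    (sierpinskiGraph (cycleGraph (n+4)) 2).edist v u := SimpleGraph.edist_comm

-- distinctness of positions in a block, k ≥ 4
lemma fin_ne1 (z : Fin (n+4)) : z + 1 ≠ z := by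
  intro h
  have := congrArg Fin.val h
  rw [val_add_one_sck] at this
  unfold sck at this
  have := z.is_lt
  split_ifs at * <;> omega

lemma fin_ne2 (z : Fin (n+4)) : z + 1 + 1 ≠ z := by
  intro h
  have := congrArg Fin.val h
  rw [val_add_one_sck, val_add_one_sck] at this
  unfold sck at this
  have := z.is_lt
  split_ifs at * <;> omega

lemma fin_ne3 (z : Fin (n+4)) : z + 1 + 1 + 1 ≠ z := by
  intro h
  have := congrArg Fin.val h
  rw [val_add_one_sck, val_add_one_sck, val_add_one_sck] at this
  unfold sck at this
  have := z.is_lt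
  split_ifs at * <;> omega

lemma mkv_ne_of_snd {a z w : Fin (n+4)} (h : z ≠ w) : mkv a z ≠ mkv a w := by
  intro he
  exact h (congrFun he 1)

lemma mkv_ne_cross {p q : Fin (n+4)} : mkv (0 : Fin (n+4)) p ≠ mkv ((0:Fin (n+4))+1) q := by
  intro he
  exact fin_ne1 0 (congrFun he 0).symm

variable (hr : ∀ v, 1 ≤ f v ∧ f v ≤ 3)
  (hp : ∀ u v, u ≠ v → f u = f v →
    (f u : ℕ∞) < (sierpinskiGraph (cycleGraph (n+4)) 2).edist u v)

include hp in
lemma ban {u v : Fin 2 → Fin (n+4)} (m : ℕ) (hne : u ≠ v)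
    (he : (sierpinskiGraph (cycleGraph (n+4)) 2).edist u v ≤ (m : ℕ∞))
    (hm : m ≤ f u) (hc : f u = f v) : False := by
  have h1 := hp u v hne hc
  have h2 : (sierpinskiGraph (cycleGraph (n+4)) 2).edist u v ≤ (f u : ℕ∞) :=
    le_trans he (by exact_mod_cast Nat.cast_le.mpr hm)
  exact absurd h1 (not_lt_of_ge h2)

include hr hp in
lemma ban_d1 (a z : Fin (n+4)) (hc : f (mkv a z) = f (mkv a (z+1))) : False :=
  ban f hp 1 (mkv_ne_of_snd (fun h => fin_ne1 z h.symm)) (e_adj (adj_step a z))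
    (hr (mkv a z)).1 hc

include hp in
lemma ban_d2 (a z : Fin (n+4)) (h2 : 2 ≤ f (mkv a z))
    (hc : f (mkv a z) = f (mkv a (z+1+1))) : False :=
  ban f hp 2 (mkv_ne_of_snd (fun h => fin_ne2 z h.symm))
    (e_tri 1 1 (e_adj (adj_step a z)) (e_adj (adj_step a (z+1)))) h2 hc

include hp in
lemma ban_d3 (a z : Fin (n+4)) (h3 : 3 ≤ f (mkv a z))
    (hc : f (mkv a z) = f (mkv a (z+1+1+1))) : False :=
  ban f hp 3 (mkv_ne_of_snd (fun h => fin_ne3 z h.symm))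
    (e_tri 2 1 (e_tri 1 1 (e_adj (adj_step a z)) (e_adj (adj_step a (z+1))))
      (e_adj (adj_step a (z+1+1)))) h3 hc

include hr in
lemma cases3 (v : Fin 2 → Fin (n+4)) : f v = 1 ∨ f v = 2 ∨ f v = 3 := by
  have := hr v; omega

include hr hp in
lemma no23 (a z : Fin (n+4)) (h2 : f (mkv a (z+1+1)) = 2)
    (h3 : f (mkv a (z+1+1+1)) = 3) : False := by
  have hp1 : f (mkv a (z+1)) = 1 := by
    rcases cases3 f hr (mkv a (z+1)) with h | h | h
    · exact h
    · exact absurd (h.trans h2.symm) (fun hc => ban_d1 f hr hp a (z+1) hc)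
    · exact absurd (h.trans h3.symm) (fun hc => ban_d2 f hp a (z+1) (by omega) hc)
  rcases cases3 f hr (mkv a z) with h | h | h
  · exact ban_d1 f hr hp a z (h.trans hp1.symm)
  · exact ban_d2 f hp a z (by omega) (h.trans h2.symm)
  · exact ban_d3 f hp a z (by omega) (h.trans h3.symm)

include hr hp in
lemma no32 (a z : Fin (n+4)) (h3 : f (mkv a z) = 3)
    (h2 : f (mkv a (z+1)) = 2) : False := by
  have hp2 : f (mkv a (z+1+1)) = 1 := by
    rcases cases3 f hr (mkv a (z+1+1)) with h | h | h
    · exact h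
    · exact absurd (h2.trans h.symm) (fun hc => ban_d1 f hr hp a (z+1) hc)
    · exact absurd (h3.trans h.symm) (fun hc => ban_d2 f hp a z (by omega) hc)
  rcases cases3 f hr (mkv a (z+1+1+1)) with h | h | h
  · exact ban_d1 f hr hp a (z+1+1) (hp2.trans h.symm)
  · exact ban_d2 f hp a (z+1) (by omega) (h2.trans h.symm)
  · exact ban_d3 f hp a z (by omega) (h3.trans h.symm)

include hr hp in
lemma nonone (a z : Fin (n+4)) (h1 : f (mkv a z) ≠ 1)
    (h2 : f (mkv a (z+1)) ≠ 1) : False := by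
  rcases cases3 f hr (mkv a z) with ha | ha | ha <;>
    rcases cases3 f hr (mkv a (z+1)) with hb | hb | hb
  · exact h1 ha
  · exact h1 ha
  · exact h1 ha
  · exact h2 hb
  · exact ban_d1 f hr hp a z (ha.trans hb.symm)
  · -- (2,3) : use no23 with base z-1-1
    have e1 : (z - 1 - 1) + 1 + 1 = z := by abel
    have e2 : (z - 1 - 1) + 1 + 1 + 1 = z + 1 := by abel
    exact no23 f hr hp a (z-1-1) (by rw [e1]; exact ha) (by rw [e2]; exact hb)
  · exact h2 hb
  · exact no32 f hr hp a z ha hb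
  · exact ban_d1 f hr hp a z (ha.trans hb.symm)

include hr hp in
lemma one_gap (a z : Fin (n+4)) (h1 : f (mkv a z) ≠ 1) : f (mkv a (z+1)) = 1 := by
  by_contra h
  exact nonone f hr hp a z h1 h

include hr hp in
lemma one_gap2 (a z : Fin (n+4)) (h1 : f (mkv a z) ≠ 1) : f (mkv a (z+1+1)) ≠ 1 := by
  have hg := one_gap f hr hp a z h1
  intro h
  exact ban_d1 f hr hp a (z+1) (hg.trans h.symm)

include hr hp in
lemma flip2 (a z : Fin (n+4)) (h2 : f (mkv a z) = 2) : f (mkv a (z+1+1)) = 3 := by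
  have hn1 := one_gap2 f hr hp a z (by omega)
  rcases cases3 f hr (mkv a (z+1+1)) with h | h | h
  · exact absurd h hn1
  · exact absurd (h2.trans h.symm) (fun hc => ban_d2 f hp a z (by omega) hc)
  · exact h

include hr hp in
lemma flip3 (a z : Fin (n+4)) (h3 : f (mkv a z) = 3) : f (mkv a (z+1+1)) = 2 := by
  have hn1 := one_gap2 f hr hp a z (by omega)
  rcases cases3 f hr (mkv a (z+1+1)) with h | h | h
  · exact absurd h hn1
  · exact h
  · exact absurd (h3.trans h.symm) (fun hc => ban_d2 f hp a z (by omega) hc)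

include hr hp in
/-- anchors: in any block, of two adjacent cells exactly one is colored 1. -/
lemma anchors (a z : Fin (n+4)) :
    (f (mkv a z) = 1 ∧ (f (mkv a (z+1)) = 2 ∨ f (mkv a (z+1)) = 3)) ∨
    (f (mkv a (z+1)) = 1 ∧ (f (mkv a z) = 2 ∨ f (mkv a z) = 3)) := by
  rcases cases3 f hr (mkv a z) with ha | ha | ha <;>
    rcases cases3 f hr (mkv a (z+1)) with hb | hb | hb
  · exact absurd (ha.trans hb.symm) (fun hc => ban_d1 f hr hp a z hc)
  · exact Or.inl ⟨ha, Or.inl hb⟩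
  · exact Or.inl ⟨ha, Or.inr hb⟩
  · exact Or.inr ⟨hb, Or.inl ha⟩
  · exact (nonone f hr hp a z (by omega) (by omega)).elim
  · exact (nonone f hr hp a z (by omega) (by omega)).elim
  · exact Or.inr ⟨hb, Or.inr ha⟩
  · exact (nonone f hr hp a z (by omega) (by omega)).elim
  · exact (nonone f hr hp a z (by omega) (by omega)).elim

end Lower

section NoThree
variable {n : ℕ} (f : (Fin 2 → Fin (n+4)) → ℕ)
  (hr : ∀ v, 1 ≤ f v ∧ f v ≤ 3)
  (hp : ∀ u v, u ≠ v → f u = f v →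
    (f u : ℕ∞) < (sierpinskiGraph (cycleGraph (n+4)) 2).edist u v)

include hr hp in
lemma no_packing3 : False := by
  -- distance bounds between the two blocks 0 and 1
  have Ec : (sierpinskiGraph (cycleGraph (n+4)) 2).edist
      (mkv (0:Fin (n+4)) (0+1)) (mkv ((0:Fin (n+4))+1) 0) ≤ ((1:ℕ) : ℕ∞) :=
    e_adj (adj_cross 0)
  have E11 := e_tri 1 1 Ec (e_adj (adj_step ((0:Fin (n+4))+1) 0))
  have esub : ((0:Fin (n+4)) - 1) + 1 = 0 := by abel
  have esub2 : ((0:Fin (n+4)) - 1) + 1 + 1 = 0 + 1 := by abel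
  have Em1 : (sierpinskiGraph (cycleGraph (n+4)) 2).edist
      (mkv ((0:Fin (n+4))+1) 0) (mkv ((0:Fin (n+4))+1) (0-1)) ≤ ((1:ℕ) : ℕ∞) := by
    have h := e_adj (adj_step ((0:Fin (n+4))+1) (0-1))
    rw [esub] at h
    rw [ecomm]
    exact h
  have E1m1 := e_tri 1 1 Ec Em1
  have E20 := e_tri 1 1 (e_adj (adj_step (0:Fin (n+4)) (0+1)).symm) Ec
  have E30 := e_tri (1+1) 1
    (e_tri 1 1 (e_adj (adj_step (0:Fin (n+4)) (0+1+1)).symm)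
      (e_adj (adj_step (0:Fin (n+4)) (0+1)).symm)) Ec
  have E00 := e_tri 1 1 (e_adj (adj_step (0:Fin (n+4)) 0)) Ec
  have E12 := e_tri (1+1) 1 E11 (e_adj (adj_step ((0:Fin (n+4))+1) (0+1)))
  -- anchors in blocks 0 and 1
  rcases anchors f hr hp 0 0 with ⟨hc00, hc01 | hc01⟩ | ⟨hc01, hc00 | hc00⟩ <;>
    rcases anchors f hr hp (0+1) 0 with ⟨hd10, hd11 | hd11⟩ | ⟨hd11, hd10 | hd10⟩
  -- block 0 case δ=0 : c00 = 1, c01 = 2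
  · -- δ' = 1 : d10 = 1, d11 = 2 : pair (1,1), t = 2
    exact ban f hp (1+1) mkv_ne_cross E11 (by omega) (hc01.trans hd11.symm)
  · -- δ' = 3 : d10 = 1, d11 = 3 : pair (1,-1), t = 2
    have hqm1 : f (mkv ((0:Fin (n+4))+1) (0-1)) = 2 := by
      have hn1 : f (mkv ((0:Fin (n+4))+1) (0-1)) ≠ 1 := by
        intro h
        exact ban_d1 f hr hp (0+1) (0-1) (by rw [esub, h, hd10])
      rcases cases3 f hr (mkv ((0:Fin (n+4))+1) (0-1)) with h | h | h
      · exact absurd h hn1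
      · exact h
      · exact absurd h (fun h' => ban_d2 f hp (0+1) (0-1) (by omega)
          (by rw [esub2, h', hd11]))
    exact ban f hp (1+1) mkv_ne_cross E1m1 (by omega) (hc01.trans hqm1.symm)
  · -- δ' = 2 : d11 = 1, d10 = 2 : pair (1,0), t = 2
    exact ban f hp 1 mkv_ne_cross Ec (by omega) (hc01.trans hd10.symm)
  · -- δ' = 0 : d11 = 1, d10 = 3 : pair (3,0), t = 3
    have hp3 : f (mkv (0:Fin (n+4)) (0+1+1+1)) = 3 := flip2 f hr hp 0 (0+1) hc01
    exact ban f hp (1+1+1) mkv_ne_cross E30 (by omega) (hp3.trans hd10.symm)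
  -- block 0 case δ=2 : c00 = 1, c01 = 3
  · -- δ' = 1 : pair (1,-1), t = 3
    have hqm1 : f (mkv ((0:Fin (n+4))+1) (0-1)) = 3 := by
      have hn1 : f (mkv ((0:Fin (n+4))+1) (0-1)) ≠ 1 := by
        intro h
        exact ban_d1 f hr hp (0+1) (0-1) (by rw [esub, h, hd10])
      rcases cases3 f hr (mkv ((0:Fin (n+4))+1) (0-1)) with h | h | h
      · exact absurd h hn1
      · exact absurd (flip2 f hr hp (0+1) (0-1) h)
          (by rw [esub2, hd11]; omega)
      · exact h
    exact ban f hp (1+1) mkv_ne_cross E1m1 (by omega) (hc01.trans hqm1.symm)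
  · -- δ' = 3 : pair (1,1), t = 3
    exact ban f hp (1+1) mkv_ne_cross E11 (by omega) (hc01.trans hd11.symm)
  · -- δ' = 2 : pair (1,2), t = 3
    have hq2 : f (mkv ((0:Fin (n+4))+1) (0+1+1)) = 3 := flip2 f hr hp (0+1) 0 hd10
    exact ban f hp (1+1+1) mkv_ne_cross E12 (by omega) (hc01.trans hq2.symm)
  · -- δ' = 0 : pair (1,0), t = 3
    exact ban f hp 1 mkv_ne_cross Ec (by omega) (hc01.trans hd10.symm)
  -- block 0 case δ=1 : c01 = 1, c00 = 2
  · -- δ' = 1 : pair (1,0), t = 1 (both colored 1)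
    exact ban f hp 1 mkv_ne_cross Ec (by omega) (hc01.trans hd10.symm)
  · -- δ' = 3 : pair (1,0), t = 1
    exact ban f hp 1 mkv_ne_cross Ec (by omega) (hc01.trans hd10.symm)
  · -- δ' = 2 : pair (0,0), t = 2
    exact ban f hp (1+1) mkv_ne_cross E00 (by omega) (hc00.trans hd10.symm)
  · -- δ' = 0 : pair (2,0), t = 3
    have hq2 : f (mkv (0:Fin (n+4)) (0+1+1)) = 3 := flip2 f hr hp 0 0 hc00
    exact ban f hp (1+1) mkv_ne_cross E20 (by omega) (hq2.trans hd10.symm)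
  -- block 0 case δ=3 : c01 = 1, c00 = 3
  · -- δ' = 1 : pair (1,0), t = 1
    exact ban f hp 1 mkv_ne_cross Ec (by omega) (hc01.trans hd10.symm)
  · -- δ' = 3 : pair (1,0), t = 1
    exact ban f hp 1 mkv_ne_cross Ec (by omega) (hc01.trans hd10.symm)
  · -- δ' = 2 : pair (2,0), t = 2
    have hq2 : f (mkv (0:Fin (n+4)) (0+1+1)) = 2 := flip3 f hr hp 0 0 hc00
    exact ban f hp (1+1) mkv_ne_cross E20 (by omega) (hq2.trans hd10.symm)
  · -- δ' = 0 : pair (0,0), t = 3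
    exact ban f hp (1+1) mkv_ne_cross E00 (by omega) (hc00.trans hd10.symm)

end NoThree

section FamB
/-- patterns for k ≡ 0 (mod 4), k ≥ 12 -/
def gB (j : ℕ) : ℕ := if j % 2 = 0 then 1 else if j % 4 = 1 then 2 else 3
def hB (j : ℕ) : ℕ :=
  if j = 0 ∨ j = 6 then 4 else if j % 2 = 1 then 1 else
  if j = 4 then 3 else if j ≤ 8 then 2 else if j % 4 = 2 then 3 else 2

lemma gB_cases (j : ℕ) :
    (gB j = 1 ∧ j % 2 = 0) ∨ (gB j = 2 ∧ j % 4 = 1) ∨ (gB j = 3 ∧ j % 4 = 3) := by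
  unfold gB; split_ifs <;> omega

lemma hB_cases (k j : ℕ) (hk : 12 ≤ k) (hm : k % 4 = 0) (hj : j < k) :
    (hB j = 4 ∧ (j = 0 ∨ j = 6)) ∨ (hB j = 1 ∧ j % 2 = 1) ∨
    (hB j = 3 ∧ (j = 4 ∨ (j % 4 = 2 ∧ 10 ≤ j))) ∨
    (hB j = 2 ∧ (j = 2 ∨ j = 8 ∨ (j % 4 = 0 ∧ 12 ≤ j))) := by
  unfold hB; split_ifs <;> omega

lemma famB (n : ℕ) (hk : 12 ≤ n+4) (hm : (n+4) % 4 = 0) :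
    IsPackingColoring (sierpinskiGraph (cycleGraph (n+4)) 2)
      (fcol (n+4) gB hB) 4 := by
  set k := n + 4 with hkdef
  have hke : k % 2 = 0 := by omega
  apply pack_mem_of_patterns hke
  · intro j hj; rcases gB_cases j with ⟨h,_⟩|⟨h,_⟩|⟨h,_⟩ <;> omega
  · intro j hj; rcases hB_cases k j hk hm hj with ⟨h,_⟩|⟨h,_⟩|⟨h,_⟩|⟨h,_⟩ <;> omega
  · intro j hj; rcases gB_cases j with ⟨h,_⟩|⟨h,_⟩|⟨h,_⟩ <;> omega
  · intro j hj; rcases hB_cases k j hk hm hj with ⟨h,_⟩|⟨h,_⟩|⟨h,_⟩|⟨h,_⟩ <;> omega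
  · intro j1 j2 h1 h2 hne hc
    rcases gB_cases j1 with ⟨e1,p1⟩|⟨e1,p1⟩|⟨e1,p1⟩ <;>
      rcases gB_cases j2 with ⟨e2,p2⟩|⟨e2,p2⟩|⟨e2,p2⟩ <;>
      rw [e1] at hc ⊢ <;> rw [cdk_eq k j1 j2 h1 h2] <;> omega
  · intro j1 j2 h1 h2 hne hc
    rcases hB_cases k j1 hk hm h1 with ⟨e1,p1⟩|⟨e1,p1⟩|⟨e1,p1⟩|⟨e1,p1⟩ <;>
      rcases hB_cases k j2 hk hm h2 with ⟨e2,p2⟩|⟨e2,p2⟩|⟨e2,p2⟩|⟨e2,p2⟩ <;>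
      rw [e1] at hc ⊢ <;> rw [cdk_eq k j1 j2 h1 h2] <;> omega
  · intro j1 j2 h1 h2 hc
    rcases gB_cases j1 with ⟨e1,p1⟩|⟨e1,p1⟩|⟨e1,p1⟩ <;>
      rcases hB_cases k j2 hk hm h2 with ⟨e2,p2⟩|⟨e2,p2⟩|⟨e2,p2⟩|⟨e2,p2⟩ <;>
      rw [e1] at hc ⊢ <;>
      rw [cdk_eq k j1 1 h1 (by omega), cdk_eq k j2 (k-1) h2 (by omega)] <;> omega
  · intro j1 j2 h1 h2 hc
    rcases hB_cases k j1 hk hm h1 with ⟨e1,p1⟩|⟨e1,p1⟩|⟨e1,p1⟩|⟨e1,p1⟩ <;>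
      rcases gB_cases j2 with ⟨e2,p2⟩|⟨e2,p2⟩|⟨e2,p2⟩ <;>
      rw [e1] at hc ⊢ <;>
      rw [cdk_eq k j1 1 h1 (by omega), cdk_eq k j2 (k-1) h2 (by omega)] <;> omega
  · intro j1 j2 h1 h2 hc1 hc2
    rcases gB_cases j1 with ⟨e1,p1⟩|⟨e1,p1⟩|⟨e1,p1⟩ <;>
      rcases gB_cases j2 with ⟨e2,p2⟩|⟨e2,p2⟩|⟨e2,p2⟩ <;>
      rw [cdk_eq k j1 1 h1 (by omega), cdk_eq k j2 (k-1) h2 (by omega)] <;> omega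
  · intro j1 j2 h1 h2 hc1 hc2
    rcases hB_cases k j1 hk hm h1 with ⟨e1,p1⟩|⟨e1,p1⟩|⟨e1,p1⟩|⟨e1,p1⟩ <;>
      rcases hB_cases k j2 hk hm h2 with ⟨e2,p2⟩|⟨e2,p2⟩|⟨e2,p2⟩|⟨e2,p2⟩ <;>
      rw [cdk_eq k j1 1 h1 (by omega), cdk_eq k j2 (k-1) h2 (by omega)] <;> omega

end FamB

section Small
def g4 (j : ℕ) : ℕ := if j = 0 then 1 else if j = 1 then 2 else if j = 2 then 1 else 3
def h4 (j : ℕ) : ℕ := if j = 0 then 1 else if j = 1 then 2 else if j = 2 then 1 else 4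

set_option maxHeartbeats 1000000 in
set_option maxRecDepth 4000 in
lemma k4_check : ∀ u v : Fin 2 → Fin (0+4), u ≠ v →
    fcol (0+4) g4 h4 u = fcol (0+4) g4 h4 v →
    fcol (0+4) g4 h4 u < DDv u v := by decide

/-- 4-periodic patterns for k = 8 -/
def p8 (a j : ℕ) : ℕ :=
  if a % 4 = 0 then (if j % 2 = 0 then 1 else if j % 4 = 1 then 2 else 3)
  else if a % 4 = 1 then
    (if j = 0 then 4 else if j % 2 = 1 then 1 else if j = 2 then 3 else
      if j = 4 then 2 else 3)
  else if a % 4 = 2 then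
    (if j % 2 = 0 then 1 else if j % 4 = 1 then 3 else 2)
  else
    (if j = 0 then 4 else if j % 2 = 1 then 1 else if j = 2 then 2 else
      if j = 4 then 3 else 2)

def f8 (u : Fin 2 → Fin (4+4)) : ℕ := p8 (u 0).val (ddk 8 (u 0).val (u 1).val)

set_option maxHeartbeats 8000000 in
set_option maxRecDepth 10000 in
lemma k8_check : ∀ u v : Fin 2 → Fin (4+4), u ≠ v → f8 u = f8 v →
    f8 u < DDv u v := by decide

end Small

/-- The packing chromatic number of `H`: the least `c` admitting a packing `c`-coloring. -/
noncomputable def packingChromaticNumber {V : Type*} (H : SimpleGraph V) : ℕ :=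
  sInf {c | ∃ f : V → ℕ, IsPackingColoring H f c}

set_option maxHeartbeats 1000000 in
set_option maxRecDepth 4000 in
lemma k4_range : ∀ v : Fin 2 → Fin (0+4),
    1 ≤ fcol (0+4) g4 h4 v ∧ fcol (0+4) g4 h4 v ≤ 4 := by decide

set_option maxHeartbeats 1000000 in
set_option maxRecDepth 4000 in
lemma k8_range : ∀ v : Fin 2 → Fin (4+4), 1 ≤ f8 v ∧ f8 v ≤ 4 := by decide

theorem stmt7 (k : ℕ) (hk : 4 ≤ k) (hkeven : Even k) (hk6 : k ≠ 6) :
    packingChromaticNumber (sierpinskiGraph (SimpleGraph.cycleGraph k) 2) = 4 := by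
  obtain ⟨n, rfl⟩ : ∃ n, k = n + 4 := ⟨k - 4, by omega⟩
  have hke2 : (n + 4) % 2 = 0 := Nat.even_iff.mp hkeven
  have hmem : ∃ f, IsPackingColoring (sierpinskiGraph (cycleGraph (n+4)) 2) f 4 := by
    have hcases : n = 0 ∨ n = 4 ∨ ((n+4) % 4 = 2 ∧ 10 ≤ n+4) ∨
        ((n+4) % 4 = 0 ∧ 12 ≤ n+4) := by omega
    rcases hcases with h0 | h4 | ⟨hA1, hA2⟩ | ⟨hB1, hB2⟩
    · subst h0
      exact ⟨fcol (0+4) g4 h4, isPacking_of_DDv _ k4_range k4_check⟩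
    · subst h4
      exact ⟨f8, isPacking_of_DDv _ k8_range k8_check⟩
    · exact ⟨_, famA n hA2 hA1⟩
    · exact ⟨_, famB n hB2 hB1⟩
  unfold packingChromaticNumber
  have hmem' : 4 ∈ {c | ∃ f : (Fin 2 → Fin (n+4)) → ℕ,
      IsPackingColoring (sierpinskiGraph (cycleGraph (n+4)) 2) f c} := hmem
  apply le_antisymm
  · exact Nat.sInf_le hmem'
  · apply le_csInf ⟨4, hmem'⟩
    rintro b ⟨f, hf⟩
    by_contra hlt
    have hb3 : b ≤ 3 := by omega
    have hr : ∀ v, 1 ≤ f v ∧ f v ≤ 3 := by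
      intro v
      have := hf.1 v
      omega
    exact no_packing3 f hr hf.2
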